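/- There exist an effect algebra L and a real-valued additive measure μ on L whose variation |μ| is not additive: there are orthogonal e, f ∈ L with |μ|(e ⊕ f) > |μ|(e) + |μ|(f). -/

import Mathlib

open Filter Topology
open scoped ENNReal NNReal

/-- An effect algebra: a partial commutative monoid with orthosupplementation
and the zero-one law. `D a b` means `a ⊕ b` is defined; `add` is the (junk-valued
outside `D`) total extension of `⊕`. -/
structure EffectAlgebra (L : Type*) where
  D : L → L → Prop
  add : L → L → L
  zero : L
  one : L
  comm_def : ∀ {a b}, D a b → D b a
  comm : ∀ {a b}, D a b → add a b = add b a
  assoc_def₁ : ∀ {a b c}, D b c → D a (add b c) → D a b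
  assoc_def₂ : ∀ {a b c}, D b c → D a (add b c) → D (add a b) c
  assoc : ∀ {a b c}, D b c → D a (add b c) → add (add a b) c = add a (add b c)
  orth : ∀ a, ∃! a', D a a' ∧ add a a' = one
  zero_one : ∀ {a}, D one a → a = zero

namespace EffectAlgebra

variable {L : Type*}

/-- The canonical order: `a ≤ b` iff `a ⊕ r = b` for some `r`. -/
def le (E : EffectAlgebra L) (a b : L) : Prop := ∃ r, E.D a r ∧ E.add a r = b

/-- The orthosupplement `1 ⊖ a`. -/
noncomputable def compl (E : EffectAlgebra L) (a : L) : L := (E.orth a).choose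

/-- Partial sums `a 0 ⊕ ⋯ ⊕ a n`. -/
def psum (E : EffectAlgebra L) (a : ℕ → L) : ℕ → L
  | 0 => a 0
  | n + 1 => E.add (E.psum a n) (a (n + 1))

/-- A sequence is orthogonal when all its finite orthosums are defined. -/
def Orthogonal (E : EffectAlgebra L) (a : ℕ → L) : Prop :=
  ∀ n, E.D (E.psum a n) (a (n + 1))

/-- `s` is the supremum of the set `S` in the canonical order. -/
def IsSup (E : EffectAlgebra L) (S : Set L) (s : L) : Prop :=
  (∀ x ∈ S, E.le x s) ∧ ∀ u, (∀ x ∈ S, E.le x u) → E.le s u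

/-- `s = ⊕ₙ a n`: the sequence is orthogonal and `s` is the sup of the finite orthosums. -/
def IsOrthoSum (E : EffectAlgebra L) (a : ℕ → L) (s : L) : Prop :=
  E.Orthogonal a ∧ E.IsSup (Set.range (E.psum a)) s

/-- Additive (finitely additive) measure. -/
def IsMeasure {G : Type*} [AddCommMonoid G] (E : EffectAlgebra L) (μ : L → G) : Prop :=
  ∀ a b, E.D a b → μ (E.add a b) = μ a + μ b

/-- σ-additivity: `μ (⊕ₙ a n) = Σₙ μ (a n)` whenever the orthosum exists. -/
def SigmaAdditive {G : Type*} [AddCommMonoid G] [TopologicalSpace G]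
    (E : EffectAlgebra L) (μ : L → G) : Prop :=
  ∀ a s, E.IsOrthoSum a s →
    Tendsto (fun n => ∑ k ∈ Finset.range n, μ (a k)) atTop (𝓝 (μ s))

/-- Exhaustivity: `μ (a n) → 0` along every orthogonal sequence. -/
def Exhaustive {G : Type*} [AddCommMonoid G] [TopologicalSpace G]
    (E : EffectAlgebra L) (μ : L → G) : Prop :=
  ∀ a, E.Orthogonal a → Tendsto (fun n => μ (a n)) atTop (𝓝 0)

/-- A generator: every element is the sup of an increasing sequence from `B`. -/
def IsGenerator (E : EffectAlgebra L) (B : Set L) : Prop :=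
  ∀ a : L, ∃ b : ℕ → L, (∀ n, b n ∈ B) ∧ (∀ n, E.le (b n) (b (n + 1)))
    ∧ E.IsSup (Set.range b) a

/-- Riesz decomposition property. -/
def RDP (E : EffectAlgebra L) : Prop :=
  ∀ a b c, E.D a b → E.le c (E.add a b) →
    ∃ c₁ c₂, E.D c₁ c₂ ∧ E.add c₁ c₂ = c ∧ E.le c₁ a ∧ E.le c₂ b

/-- Strong Riesz decomposition property. -/
def sRDP (E : EffectAlgebra L) : Prop :=
  ∀ (a : ℕ → L) (s c : L), E.IsOrthoSum a s → E.le c s →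
    ∃ c' : ℕ → L, E.IsOrthoSum c' c ∧ ∀ n, E.le (c' n) (a n)

/-- A natural basis: an orthogonal sequence of minimal nonzero elements with orthosum `1`. -/
def IsNaturalBasis (E : EffectAlgebra L) (b : ℕ → L) : Prop :=
  E.IsOrthoSum b E.one ∧
  ∀ n, b n ≠ E.zero ∧ ∀ c, c ≠ E.zero → E.le c (b n) → c = b n

/-- The set of finite orthosums of elements of the sequence `b`. -/
def finOrthosums (E : EffectAlgebra L) (b : ℕ → L) : Set L :=
  { x | ∃ c : ℕ → L, (∀ n, c n = b n ∨ c n = E.zero) ∧ E.Orthogonal c ∧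
        ∃ N, x = E.psum c N }

/-- A sequence of measures is pointwise convergent. -/
def PtwiseConv (μ : ℕ → L → ℝ) : Prop :=
  ∀ a : L, ∃ x : ℝ, Tendsto (fun i => μ i a) atTop (𝓝 x)

/-- Uniform exhaustivity of a sequence of measures. -/
def UnifExhaustive (E : EffectAlgebra L) (μ : ℕ → L → ℝ) : Prop :=
  ∀ a, E.Orthogonal a →
    TendstoUniformly (fun n (i : ℕ) => μ i (a n)) (fun _ => (0 : ℝ)) atTop

/-- Uniform strong additivity of a sequence of measures. -/
def UnifStronglyAdditive (E : EffectAlgebra L) (μ : ℕ → L → ℝ) : Prop :=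
  ∀ a, E.Orthogonal a → ∃ f : ℕ → ℝ,
    TendstoUniformly (fun n (i : ℕ) => ∑ k ∈ Finset.range n, μ i (a k)) f atTop

/-- The Nikodym property. -/
def Nikodym (E : EffectAlgebra L) : Prop :=
  ∀ μ : ℕ → L → ℝ, (∀ i, E.IsMeasure (μ i)) → (∀ i, ∃ M, ∀ a, |μ i a| ≤ M) →
    (∀ a : L, ∃ M, ∀ i, |μ i a| ≤ M) → ∃ M, ∀ i, ∀ a : L, |μ i a| ≤ M

/-- The Grothendieck property. -/
def Grothendieck (E : EffectAlgebra L) : Prop :=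
  ∀ μ : ℕ → L → ℝ, (∀ i, E.IsMeasure (μ i)) → (∀ i, ∃ M, ∀ a, |μ i a| ≤ M) →
    PtwiseConv μ → (∃ M, ∀ i, ∀ a : L, |μ i a| ≤ M) → E.UnifStronglyAdditive μ

/-- The Vitali-Hahn-Saks property. -/
def VHS (E : EffectAlgebra L) : Prop :=
  ∀ μ : ℕ → L → ℝ, (∀ i, E.IsMeasure (μ i)) → (∀ i, ∃ M, ∀ a, |μ i a| ≤ M) →
    PtwiseConv μ → E.UnifExhaustive μ

/-- The σ-Nikodym property. -/
def SigmaNikodym (E : EffectAlgebra L) : Prop :=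
  ∀ μ : ℕ → L → ℝ, (∀ i, E.IsMeasure (μ i)) → (∀ i, E.SigmaAdditive (μ i)) →
    (∀ i, ∃ M, ∀ a, |μ i a| ≤ M) →
    (∀ a : L, ∃ M, ∀ i, |μ i a| ≤ M) → ∃ M, ∀ i, ∀ a : L, |μ i a| ≤ M

/-- The σ-Vitali-Hahn-Saks property. -/
def SigmaVHS (E : EffectAlgebra L) : Prop :=
  ∀ μ : ℕ → L → ℝ, (∀ i, E.IsMeasure (μ i)) → (∀ i, E.SigmaAdditive (μ i)) →
    (∀ i, ∃ M, ∀ a, |μ i a| ≤ M) → PtwiseConv μ → E.UnifExhaustive μ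

/-- A bounding subset. -/
def Bounding (E : EffectAlgebra L) (B : Set L) : Prop :=
  ∀ (G : Type) [NormedAddCommGroup G], ∀ μ : ℕ → L → G,
    (∀ i, E.IsMeasure (μ i)) → (∀ i, E.SigmaAdditive (μ i)) →
    (∀ a : L, ∃ M, ∀ i, ‖μ i a‖ ≤ M) →
    ((∃ M, ∀ i, ∀ b ∈ B, ‖μ i b‖ ≤ M) ↔ (∃ M, ∀ i, ∀ a : L, ‖μ i a‖ ≤ M))

/-- A natural subset: a generator closed under orthosums of orthogonal pairs all of whose
orthogonal-complement slices are bounding. -/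
def NaturalSubset (E : EffectAlgebra L) (B : Set L) : Prop :=
  E.IsGenerator B ∧ (∀ b ∈ B, ∀ c ∈ B, E.D b c → E.add b c ∈ B) ∧
    ∀ b ∈ B, E.Bounding {c ∈ B | E.D c b}

/-- A natural effect algebra: one admitting a natural subset. -/
def Natural (E : EffectAlgebra L) : Prop := ∃ B, E.NaturalSubset B

/-- The orthogonally sequential property. -/
def OSP (E : EffectAlgebra L) : Prop :=
  ∀ b : ℕ → L, ∃ c : ℕ → L, E.Orthogonal c ∧ (∀ k, E.le (c k) (b k)) ∧
    ∀ (a : L) (k₀ : ℕ), E.le a (b k₀) → (∀ i, i ≠ k₀ → E.le (b i) (E.compl a)) →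
      E.le a (c k₀)

/-- The subsequential interpolation property. -/
def SIP (E : EffectAlgebra L) : Prop :=
  ∀ a : ℕ → L, E.Orthogonal a → ∀ M : Set ℕ, M.Infinite →
    ∃ (x : L) (N : Set ℕ), N ⊆ M ∧ N.Infinite ∧ (∀ n ∈ N, E.le (a n) x) ∧
      ∀ n ∉ N, E.le (a n) (E.compl x)

/-- Iterated orthosum starting from `x`: all steps defined. -/
def OrthoFrom (E : EffectAlgebra L) : L → List L → Prop
  | _, [] => True
  | x, y :: ys => E.D x y ∧ E.OrthoFrom (E.add x y) ys

/-- The orthosum `x ⊕ y₁ ⊕ ⋯ ⊕ yₙ` of a nonempty list. -/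
def psumList (E : EffectAlgebra L) : L → List L → L
  | x, [] => x
  | x, y :: ys => E.psumList (E.add x y) ys

/-- The variation of a measure: the sup over finite decompositions
`e = e₁ ⊕ ⋯ ⊕ eₙ` of `Σ ‖μ eᵢ‖`, valued in `[0,∞]`. -/
noncomputable def variation {G : Type*} [NormedAddCommGroup G]
    (E : EffectAlgebra L) (μ : L → G) (e : L) : ℝ≥0∞ :=
  sSup { v : ℝ≥0∞ | ∃ (x : L) (xs : List L), E.OrthoFrom x xs ∧ E.psumList x xs = e ∧
    v = ((x :: xs).map fun y => (‖μ y‖₊ : ℝ≥0∞)).sum }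

end EffectAlgebra


inductive L6 : Type
  | o | xp | xm | yp | ym | top
deriving DecidableEq

instance : Fintype L6 :=
  ⟨{.o, .xp, .xm, .yp, .ym, .top}, fun x => by cases x <;> decide⟩

open L6

def d6 : L6 → L6 → Bool
  | .o, _ => true
  | _, .o => true
  | .xp, .xm => true
  | .xm, .xp => true
  | .yp, .ym => true
  | .ym, .yp => true
  | _, _ => false

def add6 : L6 → L6 → L6
  | .o, b => b
  | a, .o => a
  | _, _ => .top

def E6 : EffectAlgebra L6 where
  D a b := d6 a b = true
  add := add6
  zero := .o
  one := .top
  comm_def := by decide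
  comm := by decide
  assoc_def₁ := by decide
  assoc_def₂ := by decide
  assoc := by decide
  orth := fun a => by
    cases a with
    | o => exact ⟨.top, by decide, by decide⟩
    | xp => exact ⟨.xm, by decide, by decide⟩
    | xm => exact ⟨.xp, by decide, by decide⟩
    | yp => exact ⟨.ym, by decide, by decide⟩
    | ym => exact ⟨.yp, by decide, by decide⟩
    | top => exact ⟨.o, by decide, by decide⟩
  zero_one := by decide

noncomputable def mu6 : L6 → ℝ
  | .o => 0
  | .xp => 1
  | .xm => 1
  | .yp => 5
  | .ym => -3
  | .top => 2

noncomputable def W6 : L6 → ℝ≥0∞ := fun y => (‖mu6 y‖₊ : ℝ≥0∞)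

lemma W6_o : W6 .o = 0 := by simp [W6, mu6]
lemma W6_xp : W6 .xp = 1 := by simp [W6, mu6]
lemma W6_xm : W6 .xm = 1 := by simp [W6, mu6]
lemma W6_yp : W6 .yp = 5 := by
  simp [W6, mu6, Real.nnnorm_ofNat]
lemma W6_ym : W6 .ym = 3 := by
  rw [show W6 .ym = (‖(-3:ℝ)‖₊ : ℝ≥0∞) from rfl, nnnorm_neg]
  simp [Real.nnnorm_ofNat]

lemma stepA (s : L6 → Bool)
    (hs : ∀ a b, d6 a b = true → s (add6 a b) = true → s a = true) :
    ∀ (xs : List L6) (x : L6), E6.OrthoFrom x xs →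
      s (E6.psumList x xs) = true → s x = true := by
  intro xs
  induction xs with
  | nil => intro x _ h; exact h
  | cons y ys ih =>
    intro x hof hsum
    obtain ⟨hd, hof'⟩ := hof
    exact hs x y hd (ih (add6 x y) hof' hsum)

lemma sumA (s : L6 → Bool)
    (hs : ∀ a b, d6 a b = true → s (add6 a b) = true → s a = true)
    (hw : ∀ a b, d6 a b = true → s (add6 a b) = true → W6 a + W6 b = W6 (add6 a b)) :
    ∀ (xs : List L6) (x : L6), E6.OrthoFrom x xs →
      s (E6.psumList x xs) = true →
      ((x :: xs).map W6).sum = W6 (E6.psumList x xs) := by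
  intro xs
  induction xs with
  | nil => intro x _ _; simp [EffectAlgebra.psumList]
  | cons y ys ih =>
    intro x hof hsum
    obtain ⟨hd, hof'⟩ := hof
    have hres : E6.psumList x (y :: ys) = E6.psumList (add6 x y) ys := rfl
    rw [hres] at hsum ⊢
    have hxy : s (add6 x y) = true := stepA s hs ys (add6 x y) hof' hsum
    have := ih (add6 x y) hof' hsum
    simp only [List.map_cons, List.sum_cons] at this ⊢
    rw [← this, ← add_assoc, hw x y hd hxy]

def sxp : L6 → Bool | .o => true | .xp => true | _ => false
def sxm : L6 → Bool | .o => true | .xm => true | _ => false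

lemma hw_gen (s : L6 → Bool) (hso : s .top = false) :
    ∀ a b, d6 a b = true → s (add6 a b) = true → W6 a + W6 b = W6 (add6 a b) := by
  intro a b hd hsab
  cases a <;> cases b <;> simp_all [d6, add6, W6_o]

lemma var_le (s : L6 → Bool) (hso : s .top = false)
    (hs : ∀ a b, d6 a b = true → s (add6 a b) = true → s a = true)
    (e : L6) (hse : s e = true) :
    E6.variation mu6 e ≤ W6 e := by
  apply sSup_le
  rintro v ⟨x, xs, hof, hps, rfl⟩
  have : ((x :: xs).map W6).sum = W6 (E6.psumList x xs) := by
    apply sumA s hs (hw_gen s hso) xs x hof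
    rw [hps]; exact hse
  rw [hps] at this
  exact le_of_eq this


open EffectAlgebra in
/-- There are an effect algebra and a real-valued measure on it whose variation is
not additive. -/
theorem stmt18 :
    ∃ (L : Type) (E : EffectAlgebra L) (μ : L → ℝ), E.IsMeasure μ ∧
      ∃ e f : L, E.D e f ∧
        E.variation μ e + E.variation μ f < E.variation μ (E.add e f) := by
  refine ⟨L6, E6, mu6, ?_, .xp, .xm, rfl, ?_⟩
  · intro a b hd
    cases a <;> cases b <;> simp_all [E6, d6, add6, mu6] <;> norm_num
  · have h1 : E6.variation mu6 .xp ≤ 1 := by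
      have := var_le sxp rfl (by decide) .xp rfl
      rwa [W6_xp] at this
    have h2 : E6.variation mu6 .xm ≤ 1 := by
      have := var_le sxm rfl (by decide) .xm rfl
      rwa [W6_xm] at this
    have h3 : (8 : ℝ≥0∞) ≤ E6.variation mu6 (E6.add .xp .xm) := by
      apply le_sSup
      refine ⟨.yp, [.ym], ⟨rfl, trivial⟩, rfl, ?_⟩
      show (8 : ℝ≥0∞) = W6 .yp + (W6 .ym + 0)
      rw [W6_yp, W6_ym]; norm_num
    calc E6.variation mu6 .xp + E6.variation mu6 .xm ≤ 1 + 1 := add_le_add h1 h2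
      _ < 8 := by norm_num
      _ ≤ _ := h3
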